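/- Let q be an odd prime power and let G be an invertible symmetric n×n matrix over F_q. Then there exists an invertible n×n matrix B over F_q such that G = B Bᵀ if and only if det(G) is a nonzero square in F_q. -/

import Mathlib

open Matrix

section Aux

variable {F : Type*} [Field F]

/-- Congruence of square matrices. -/
private def MCong {m : Type*} [Fintype m] [DecidableEq m] (A B : Matrix m m F) : Prop :=
  ∃ P : Matrix m m F, IsUnit P ∧ P * A * Pᵀ = B

private theorem MCong.refl {m : Type*} [Fintype m] [DecidableEq m] (A : Matrix m m F) :
    MCong A A := ⟨1, isUnit_one, by simp⟩

private theorem MCong.trans {m : Type*} [Fintype m] [DecidableEq m] {A B C : Matrix m m F}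
    (h₁ : MCong A B) (h₂ : MCong B C) : MCong A C := by
  obtain ⟨P, hP, hPe⟩ := h₁
  obtain ⟨Q, hQ, hQe⟩ := h₂
  refine ⟨Q * P, hQ.mul hP, ?_⟩
  rw [transpose_mul, ← hQe, ← hPe]
  simp only [Matrix.mul_assoc]

private theorem mcong_of_reindex {k l : Type*} [Fintype k] [DecidableEq k] [Fintype l]
    [DecidableEq l] (e : k ≃ l) {d d' : l → F}
    (h : MCong (diagonal (d ∘ e)) (diagonal (d' ∘ e))) : MCong (diagonal d) (diagonal d') := by
  obtain ⟨P, hP, hPe⟩ := h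
  have hde : ∀ f : l → F, (diagonal (f ∘ e)).submatrix e.symm e.symm = diagonal f := by
    intro f
    have hfe : (f ∘ e) ∘ e.symm = f := by
      funext i
      exact congrArg f (e.apply_symm_apply i)
    rw [submatrix_diagonal_equiv, hfe]
  refine ⟨P.submatrix e.symm e.symm, ?_, ?_⟩
  · rw [isUnit_iff_isUnit_det, det_submatrix_equiv_self, ← isUnit_iff_isUnit_det]
    exact hP
  · rw [← hde d, transpose_submatrix, submatrix_mul_equiv, submatrix_mul_equiv, ← hde d', hPe]

private theorem mcong_blocks {k l : Type*} [Fintype k] [DecidableEq k] [Fintype l] [DecidableEq l]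
    {A A' : Matrix k k F} {C C' : Matrix l l F} (h₁ : MCong A A') (h₂ : MCong C C') :
    MCong (fromBlocks A 0 0 C) (fromBlocks A' 0 0 C') := by
  obtain ⟨P, hP, hPe⟩ := h₁
  obtain ⟨Q, hQ, hQe⟩ := h₂
  refine ⟨fromBlocks P 0 0 Q, isUnit_fromBlocks_zero₂₁.mpr ⟨hP, hQ⟩, ?_⟩
  rw [fromBlocks_transpose, fromBlocks_multiply, fromBlocks_multiply]
  simp [hPe, hQe]

variable [Fintype F]

private theorem exists_sq_sq (hF : Fintype.card F % 2 = 1) {a b : F} (ha : a ≠ 0) (hb : b ≠ 0) :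
    ∃ x y : F, a * x ^ 2 + b * y ^ 2 = 1 := by
  obtain ⟨x, y, hxy⟩ := FiniteField.exists_root_sum_quadratic
    (f := Polynomial.C a * Polynomial.X ^ 2 + Polynomial.C 0 * Polynomial.X + Polynomial.C (-1))
    (g := Polynomial.C b * Polynomial.X ^ 2 + Polynomial.C 0 * Polynomial.X + Polynomial.C 0)
    (Polynomial.degree_quadratic ha) (Polynomial.degree_quadratic hb) hF
  refine ⟨x, y, ?_⟩
  simp only [Polynomial.eval_add, Polynomial.eval_mul, Polynomial.eval_C, Polynomial.eval_pow,
    Polynomial.eval_X] at hxy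
  linear_combination hxy

private theorem mcong_two (hF : Fintype.card F % 2 = 1) {a b : F} (ha : a ≠ 0) (hb : b ≠ 0) :
    MCong (diagonal (Sum.elim (fun _ : Fin 1 => a) (fun _ : Fin 1 => b)))
      (diagonal (Sum.elim (fun _ : Fin 1 => a * b) (fun _ : Fin 1 => (1 : F)))) := by
  obtain ⟨x, y, hxy⟩ := exists_sq_sq hF ha hb
  refine ⟨fromBlocks ((-(b * y)) • 1) ((a * x) • 1) (x • 1) (y • 1), ?_, ?_⟩
  · rw [isUnit_iff_isUnit_det]
    have h1 : (fromBlocks ((-(b * y)) • 1) ((a * x) • 1) (x • 1) (y • 1) :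
          Matrix (Fin 1 ⊕ Fin 1) (Fin 1 ⊕ Fin 1) F) *
        (fromBlocks ((-y) • 1) ((a * x) • 1) (x • 1) ((b * y) • 1)) = 1 := by
      rw [fromBlocks_multiply, ← fromBlocks_one]
      simp only [Matrix.smul_mul, Matrix.mul_smul, Matrix.one_mul, smul_smul, ← add_smul]
      rw [show -y * -(b * y) + x * (a * x) = 1 by linear_combination hxy,
        show a * x * -(b * y) + b * y * (a * x) = 0 by ring,
        show -y * x + x * y = 0 by ring,
        show a * x * x + b * y * y = 1 by linear_combination hxy]
      simp
    have := congrArg Matrix.det h1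
    rw [det_mul, det_one] at this
    exact IsUnit.of_mul_eq_one _ this
  · have hd1 : diagonal (Sum.elim (fun _ : Fin 1 => a) (fun _ : Fin 1 => b)) =
        fromBlocks ((a : F) • 1) 0 0 (b • 1) := by
      rw [← fromBlocks_diagonal, smul_one_eq_diagonal, smul_one_eq_diagonal]
    have hd2 : diagonal (Sum.elim (fun _ : Fin 1 => a * b) (fun _ : Fin 1 => (1 : F))) =
        fromBlocks ((a * b : F) • 1) 0 0 ((1 : F) • 1) := by
      rw [← fromBlocks_diagonal, smul_one_eq_diagonal, smul_one_eq_diagonal]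
    rw [hd1, hd2, fromBlocks_transpose, fromBlocks_multiply, fromBlocks_multiply]
    simp only [transpose_smul, transpose_one, transpose_zero, Matrix.smul_mul, Matrix.mul_smul,
      Matrix.one_mul, Matrix.mul_one, Matrix.mul_zero, Matrix.zero_mul, smul_zero,
      add_zero, zero_add, smul_smul, ← add_smul]
    rw [show -(b * y) * (a * -(b * y)) + a * x * (b * (a * x)) = a * b by
        linear_combination (a*b) * hxy,
      show x * (a * -(b * y)) + y * (b * (a * x)) = 0 by ring,
      show -(b * y) * (a * x) + a * x * (b * y) = 0 by ring,
      show x * (a * x) + y * (b * y) = 1 by linear_combination hxy]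
    simp


private theorem diag_mcong (hF : Fintype.card F % 2 = 1) :
    ∀ (m : ℕ) (d : Fin (m + 1) → F), (∀ i, d i ≠ 0) →
      MCong (diagonal d) (diagonal (fun i => if i = 0 then ∏ j, d j else 1)) := by
  intro m
  induction m with
  | zero =>
    intro d _
    have h : (fun i : Fin 1 => if i = 0 then ∏ j, d j else 1) = d := by
      funext i
      have hi : i = 0 := Subsingleton.elim _ _
      simp [hi]
    rw [h]
    exact MCong.refl _
  | succ m ih =>
    intro d hd
    set e : Fin 1 ⊕ Fin (m + 1) ≃ Fin (m + 1 + 1) :=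
      finSumFinEquiv.trans (finCongr (by omega)) with he
    apply mcong_of_reindex e
    have he0 : e (Sum.inl 0) = 0 := by
      apply Fin.ext
      simp [he]
    have her : ∀ j : Fin (m + 1), e (Sum.inr j) ≠ 0 := by
      intro j hj
      have : (e (Sum.inr j) : ℕ) = 0 := by rw [hj]; rfl
      simp [he] at this
    set dt : Fin (m + 1) → F := fun j => d (e (Sum.inr j)) with hdt
    have hdtne : ∀ j, dt j ≠ 0 := fun j => hd _
    have h1 : d ∘ e = Sum.elim (fun _ : Fin 1 => d 0) dt := by
      funext s
      rcases s with i | j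
      · have hi : i = 0 := Subsingleton.elim _ _
        subst hi
        simp [he0]
      · rfl
    have h2 : (fun i => if i = 0 then ∏ j, d j else 1) ∘ e =
        Sum.elim (fun _ : Fin 1 => ∏ j, d j) (fun _ : Fin (m + 1) => (1 : F)) := by
      funext s
      rcases s with i | j
      · have hi : i = 0 := Subsingleton.elim _ _
        subst hi
        simp [Function.comp_apply, he0]
      · simp [Function.comp_apply, her j]
    have hprod : ∏ j, d j = d 0 * ∏ j, dt j := by
      rw [← Equiv.prod_comp e d, Fintype.prod_sum_type, Fin.prod_univ_one, he0]
    rw [h1, h2]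
    refine MCong.trans (B := diagonal (Sum.elim (fun _ : Fin 1 => d 0)
      (fun i : Fin (m + 1) => if i = 0 then ∏ j, dt j else 1))) ?_ ?_
    · rw [← fromBlocks_diagonal, ← fromBlocks_diagonal]
      exact mcong_blocks (MCong.refl _) (ih dt hdtne)
    · set e4 : Fin 1 ⊕ Fin m ≃ Fin (m + 1) := finSumFinEquiv.trans (finCongr (by omega)) with he4
      set e3 : (Fin 1 ⊕ Fin 1) ⊕ Fin m ≃ Fin 1 ⊕ Fin (m + 1) :=
        (Equiv.sumAssoc (Fin 1) (Fin 1) (Fin m)).trans ((Equiv.refl (Fin 1)).sumCongr e4) with he3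
      apply mcong_of_reindex e3
      have he40 : ∀ i : Fin 1, e4 (Sum.inl i) = 0 := by
        intro i
        apply Fin.ext
        have hi : i = 0 := Subsingleton.elim _ _
        subst hi
        simp [he4]
      have he4r : ∀ j : Fin m, e4 (Sum.inr j) ≠ 0 := by
        intro j hj
        have : (e4 (Sum.inr j) : ℕ) = 0 := by rw [hj]; rfl
        simp [he4] at this
      have h3 : Sum.elim (fun _ : Fin 1 => d 0)
          (fun i : Fin (m + 1) => if i = 0 then ∏ j, dt j else 1) ∘ e3 =
          Sum.elim (Sum.elim (fun _ : Fin 1 => d 0) (fun _ : Fin 1 => ∏ j, dt j))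
            (fun _ : Fin m => (1 : F)) := by
        funext s
        rcases s with (i | i) | j
        · simp [he3]
        · simp [he3, he40 i]
        · simp [he3, he4r j]
      have h4 : Sum.elim (fun _ : Fin 1 => ∏ j, d j) (fun _ : Fin (m + 1) => (1 : F)) ∘ e3 =
          Sum.elim (Sum.elim (fun _ : Fin 1 => ∏ j, d j) (fun _ : Fin 1 => (1 : F)))
            (fun _ : Fin m => (1 : F)) := by
        funext s
        rcases s with (i | i) | j <;> simp [he3]
      rw [h3, h4,
        ← fromBlocks_diagonal (Sum.elim (fun _ : Fin 1 => d 0) fun _ : Fin 1 => ∏ j, dt j)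
          (fun _ : Fin m => (1 : F)),
        ← fromBlocks_diagonal (Sum.elim (fun _ : Fin 1 => ∏ j, d j) fun _ : Fin 1 => (1 : F))
          (fun _ : Fin m => (1 : F))]
      refine mcong_blocks ?_ (MCong.refl _)
      have hgoal : (fun _ : Fin 1 => ∏ j, d j) = (fun _ : Fin 1 => d 0 * ∏ j, dt j) := by
        funext _
        exact hprod
      rw [hgoal]
      exact mcong_two hF (hd 0) (Finset.prod_ne_zero_iff.mpr fun j _ => hdtne j)

omit [Fintype F] in
private theorem mcong_diagonal_of_isSymm {n : ℕ} [Invertible (2 : F)]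
    (G : Matrix (Fin n) (Fin n) F) (hsymm : G.IsSymm) :
    ∃ d : Fin n → F, MCong G (diagonal d) := by
  classical
  set Bf : LinearMap.BilinForm F (Fin n → F) := Matrix.toBilin' G with hBf
  have hBsymm : Bf.IsSymm := by
    refine ⟨fun x y => ?_⟩
    simp only [RingHom.id_apply, hBf, Matrix.toBilin'_apply]
    rw [Finset.sum_comm]
    refine Finset.sum_congr rfl fun i _ => Finset.sum_congr rfl fun j _ => ?_
    rw [← hsymm.apply i j]
    ring
  obtain ⟨v0, hv0⟩ := LinearMap.BilinForm.exists_orthogonal_basis (LinearMap.BilinForm.isSymm_iff.mp hBsymm)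
  set v := v0.reindex (finCongr (Module.finrank_fin_fun (R := F))) with hv
  have hortho : ∀ i j : Fin n, i ≠ j → Bf (v i) (v j) = 0 := by
    intro i j hij
    rw [hv]
    simp only [Module.Basis.reindex_apply]
    exact hv0 (fun hc => hij (by simpa using congrArg (finCongr
      (Module.finrank_fin_fun (R := F))) hc))
  set P : Matrix (Fin n) (Fin n) F := Matrix.of fun i j => v i j with hP
  have hPG : ∀ i j, (P * G * Pᵀ) i j = Bf (v i) (v j) := by
    intro i j
    rw [hBf, Matrix.toBilin'_apply]
    simp only [Matrix.mul_apply, Matrix.transpose_apply, hP, Matrix.of_apply, Finset.sum_mul]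
    rw [Finset.sum_comm]
  have hPunit : IsUnit P := by
    have hPt : Pᵀ = (Pi.basisFun F (Fin n)).toMatrix v := by
      ext i j
      simp [Module.Basis.toMatrix_apply, hP]
    have hut : IsUnit Pᵀ := by
      rw [hPt]
      letI := Module.Basis.invertibleToMatrix (Pi.basisFun F (Fin n)) v
      exact isUnit_of_invertible _
    rwa [isUnit_iff_isUnit_det, det_transpose, ← isUnit_iff_isUnit_det] at hut
  refine ⟨fun i => Bf (v i) (v i), P, hPunit, ?_⟩
  ext i j
  by_cases hij : i = j
  · subst hij
    rw [hPG, diagonal_apply_eq]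
  · rw [hPG, diagonal_apply_ne _ hij]
    exact hortho i j hij

end Aux

/-- Let `q` be an odd prime power and `G` an invertible symmetric
`n × n` matrix over `F_q`.  Then there is an invertible matrix `B` with `G = B * Bᵀ`
if and only if `det G` is a nonzero square in `F_q`. -/
theorem factor_symmetric_iff_det_square {F : Type*} [Field F] [Fintype F]
    (hodd : Odd (Fintype.card F))
    {n : ℕ} (G : Matrix (Fin n) (Fin n) F) (hsymm : G.IsSymm) (hinv : IsUnit G) :
    (∃ B : Matrix (Fin n) (Fin n) F, IsUnit B ∧ G = B * Bᵀ) ↔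
      ∃ a : F, a ≠ 0 ∧ G.det = a ^ 2 := by
  constructor
  · rintro ⟨B, hB, rfl⟩
    refine ⟨B.det, ?_, by rw [det_mul, det_transpose, sq]⟩
    intro h0
    rw [isUnit_iff_isUnit_det, h0] at hB
    exact hB.ne_zero rfl
  · rintro ⟨a, ha, hdet⟩
    have hF : Fintype.card F % 2 = 1 := Nat.odd_iff.mp hodd
    have hchar : ringChar F ≠ 2 := by
      intro h
      have := FiniteField.even_card_of_char_two h
      omega
    have h2 : (2 : F) ≠ 0 := by
      intro h20
      apply hchar
      have hdvd : ringChar F ∣ 2 := (CharP.cast_eq_zero_iff F (ringChar F) 2).mp (by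
        exact_mod_cast h20)
      rcases (Nat.prime_two.eq_one_or_self_of_dvd _ hdvd) with h1 | h1
      · exact absurd h1 (CharP.ringChar_ne_one)
      · exact h1
    letI : Invertible (2 : F) := invertibleOfNonzero h2
    cases n with
    | zero =>
      exact ⟨1, isUnit_one, Subsingleton.elim _ _⟩
    | succ m =>
      obtain ⟨d, hcongd⟩ := mcong_diagonal_of_isSymm G hsymm
      have hdU : IsUnit (diagonal d) := by
        obtain ⟨P, hP, hPe⟩ := hcongd
        rw [← hPe]
        exact (hP.mul hinv).mul (by
          rwa [isUnit_iff_isUnit_det, det_transpose, ← isUnit_iff_isUnit_det])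
      have hdne : ∀ i, d i ≠ 0 := by
        rw [isUnit_iff_isUnit_det, det_diagonal] at hdU
        intro i hi
        exact hdU.ne_zero (Finset.prod_eq_zero (Finset.mem_univ i) hi)
      obtain ⟨Q, hQ, hQG⟩ := MCong.trans hcongd (diag_mcong hF m d hdne)
      have hQd : IsUnit Q.det := (Matrix.isUnit_iff_isUnit_det Q).mp hQ
      have hQtd : IsUnit Qᵀ.det := by rwa [det_transpose]
      have hdetD : Q.det * G.det * Q.det = ∏ j, d j := by
        have := congrArg Matrix.det hQG
        rw [det_mul, det_mul, det_transpose, det_diagonal] at this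
        rw [this]
        simp [Finset.prod_ite_eq']
      set c : F := Q.det * a with hc
      have hcne : c ≠ 0 := mul_ne_zero hQd.ne_zero ha
      have hc2 : ∏ j, d j = c ^ 2 := by
        rw [← hdetD, hdet]
        ring
      set E : Matrix (Fin (m + 1)) (Fin (m + 1)) F :=
        diagonal (fun i => if i = 0 then c else 1) with hE
      have hEunit : IsUnit E := by
        rw [hE, isUnit_iff_isUnit_det, det_diagonal]
        simp only [Finset.prod_ite_eq', Finset.mem_univ, if_true]
        exact (isUnit_iff_ne_zero).mpr hcne
      have hEE : E * Eᵀ = diagonal (fun i => if i = 0 then ∏ j, d j else 1) := by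
        have hfun : (fun i : Fin (m + 1) =>
            (if i = 0 then c else 1) * (if i = 0 then c else 1)) =
            (fun i : Fin (m + 1) => if i = 0 then ∏ j, d j else 1) := by
          funext i
          by_cases hi : i = 0 <;> simp [hi, hc2, pow_two]
        rw [hE, diagonal_transpose, diagonal_mul_diagonal, hfun]
      refine ⟨Q⁻¹ * E, (Matrix.isUnit_nonsing_inv_iff.mpr hQ).mul hEunit, ?_⟩
      have step : (Q⁻¹ * E) * (Q⁻¹ * E)ᵀ = Q⁻¹ * (Q * G * Qᵀ) * (Qᵀ)⁻¹ := by
        rw [transpose_mul, transpose_nonsing_inv, hQG, ← hEE]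
        simp only [Matrix.mul_assoc]
      rw [step, ← Matrix.mul_assoc, ← Matrix.mul_assoc,
        Matrix.nonsing_inv_mul Q hQd, Matrix.one_mul, Matrix.mul_assoc,
        Matrix.mul_nonsing_inv Qᵀ hQtd, Matrix.mul_one]
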